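/- The integral closure of an ideal I in a commutative ring R, defined as the set of x in R satisfying an equation x^n + a_1 x^{n-1} + ... + a_n = 0 with a_j in I^j, is itself an ideal of R. -/

import Mathlib

/-- The set of elements of `R` integral over the ideal `I`: `x` satisfying
`x ^ n + a 1 * x ^ (n-1) + ⋯ + a n = 0` with `a j ∈ I ^ j`. -/
def Ideal.intCl {R : Type*} [CommRing R] (I : Ideal R) : Set R :=
  {x | ∃ n : ℕ, 0 < n ∧ ∃ a : ℕ → R,
    (∀ j ∈ Finset.Icc 1 n, a j ∈ I ^ j) ∧
    x ^ n + ∑ j ∈ Finset.Icc 1 n, a j * x ^ (n - j) = 0}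

/-- Minimal number of generators of an ideal. -/
noncomputable def Ideal.mu {R : Type*} [CommRing R] (I : Ideal R) : ℕ :=
  sInf {n : ℕ | ∃ s : Finset R, s.card = n ∧ Ideal.span (s : Set R) = I}

/-- The `M`-adic order of an ideal `I`. -/
noncomputable def Ideal.ord {R : Type*} [CommRing R] (M I : Ideal R) : ℕ :=
  sSup {n : ℕ | I ≤ M ^ n}

open Polynomial

private lemma mem_intCl_iff {R : Type*} [CommRing R] (I : Ideal R) (x : R) :
    x ∈ I.intCl ↔ (monomial 1 x : R[X]) ∈ integralClosure (reesAlgebra I) R[X] := by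
  have hmap : ∀ c : reesAlgebra I, algebraMap (reesAlgebra I) R[X] c = (c : R[X]) :=
    fun c => rfl
  have hz : ∀ k : ℕ, (monomial 1 x : R[X]) ^ k = monomial k (x ^ k) := by
    intro k; rw [monomial_pow, one_mul]
  constructor
  · rintro ⟨n, hn, a, ha, he⟩
    classical
    set b : ℕ → reesAlgebra I := fun j =>
      if h : j ∈ Finset.Icc 1 n then
        ⟨monomial j (a j), reesAlgebra.monomial_mem.mpr (ha j h)⟩ else 0 with hb
    refine ⟨X ^ n + ∑ j ∈ Finset.Icc 1 n, C (b j) * X ^ (n - j), ?_, ?_⟩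
    · apply monic_X_pow_add
      refine lt_of_le_of_lt (degree_sum_le _ _) ?_
      rw [Finset.sup_lt_iff (by exact_mod_cast WithBot.bot_lt_coe n)]
      intro j hj
      refine lt_of_le_of_lt (degree_C_mul_X_pow_le _ _) ?_
      exact_mod_cast Nat.sub_lt hn (Finset.mem_Icc.mp hj).1
    · show eval₂ (algebraMap (reesAlgebra I) R[X]) (monomial 1 x) _ = 0
      rw [eval₂_add, eval₂_finset_sum, eval₂_pow, eval₂_X, hz]
      have hcoe : ∀ j ∈ Finset.Icc 1 n,
          eval₂ (algebraMap (reesAlgebra I) R[X]) (monomial 1 x) (C (b j) * X ^ (n - j))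
            = monomial n (a j * x ^ (n - j)) := by
        intro j hj
        rw [eval₂_mul, eval₂_C, eval₂_pow, eval₂_X, hz, hmap, hb]
        simp only [dif_pos hj]
        rw [monomial_mul_monomial, Nat.add_sub_cancel' (Finset.mem_Icc.mp hj).2]
      rw [Finset.sum_congr rfl hcoe, ← map_sum (monomial n), ← map_add (monomial n), he,
        monomial_zero_right]
  · rintro ⟨p, hp, hpe⟩
    by_cases hn : p.natDegree = 0
    · have hp1 : p = 1 := hp.natDegree_eq_zero.mp hn
      have h1 : (1 : R[X]) = 0 := by simpa [hp1] using hpe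
      have h10 : (1 : R) = 0 := by
        simpa using congrArg (fun q => Polynomial.coeff q 0) h1
      have : Subsingleton R := subsingleton_of_zero_eq_one h10.symm
      exact ⟨1, one_pos, 0, fun j _ => (I ^ j).zero_mem, Subsingleton.elim _ _⟩
    · set n := p.natDegree with hndef
      have key : ∑ i ∈ Finset.range (n + 1),
          ((p.coeff i : R[X]).coeff (n - i)) * x ^ i = 0 := by
        have h0 : (aeval (monomial 1 x : R[X]) p) = 0 := hpe
        rw [aeval_eq_sum_range] at h0
        have h1 := congrArg (fun q => Polynomial.coeff q n) h0
        simp only [Polynomial.finset_sum_coeff, coeff_zero] at h1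
        rw [← h1]
        apply Finset.sum_congr rfl
        intro i hi
        have hile : i ≤ n := Nat.lt_succ_iff.mp (Finset.mem_range.mp hi)
        rw [Algebra.smul_def, hmap, hz]
        conv_rhs => rw [show n = n - i + i from (Nat.sub_add_cancel hile).symm]
        rw [coeff_mul_monomial]
      refine ⟨n, Nat.pos_of_ne_zero hn, fun k => (p.coeff (n - k) : R[X]).coeff k,
        fun k _ => (p.coeff (n - k)).2 k, ?_⟩
      rw [Finset.sum_range_succ] at key
      have hnn : ((p.coeff n : R[X]).coeff (n - n)) * x ^ n = x ^ n := by
        rw [hndef, hp.coeff_natDegree]; simp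
      rw [hnn] at key
      rw [← key, add_comm]
      congr 1
      refine Finset.sum_nbij' (fun k => n - k) (fun i => n - i) ?_ ?_ ?_ ?_ ?_
      · intro k hk
        simp only [Finset.mem_Icc] at hk
        simp only [Finset.mem_range]
        omega
      · intro i hi
        simp only [Finset.mem_range] at hi
        simp only [Finset.mem_Icc]
        omega
      · intro k hk
        simp only [Finset.mem_Icc] at hk
        omega
      · intro i hi
        simp only [Finset.mem_range] at hi
        omega
      · intro k hk
        have hk' := Finset.mem_Icc.mp hk
        have h1 : n - (n - k) = k := by omega
        rw [h1]

/-- The integral closure of an ideal is itself an ideal. -/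
theorem intCl_isIdeal {R : Type*} [CommRing R] (I : Ideal R) :
    ∃ J : Ideal R, (J : Set R) = I.intCl := by
  have hadd : ∀ {a b : R}, a ∈ I.intCl → b ∈ I.intCl → a + b ∈ I.intCl := by
    intro a b ha hb
    rw [mem_intCl_iff] at *
    rw [map_add (monomial 1)]
    exact add_mem ha hb
  have hzero : (0 : R) ∈ I.intCl := by
    rw [mem_intCl_iff]
    simpa using (integralClosure (reesAlgebra I) R[X]).zero_mem
  have hsmul : ∀ (c a : R), a ∈ I.intCl → c • a ∈ I.intCl := by
    intro c a ha
    rw [mem_intCl_iff] at *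
    have h1 : (monomial 1 (c • a) : R[X]) = C c * monomial 1 a := by
      rw [C_mul_monomial, smul_eq_mul]
    rw [h1]
    have hc : (C c : R[X]) ∈ reesAlgebra I := by
      intro i
      rcases Nat.eq_zero_or_pos i with h | h
      · simp [h, coeff_C]
      · simp [coeff_C, h.ne']
    exact mul_mem ((integralClosure (reesAlgebra I) R[X]).algebraMap_mem ⟨_, hc⟩) ha
  exact ⟨{ carrier := I.intCl, add_mem' := hadd, zero_mem' := hzero,
           smul_mem' := hsmul }, rfl⟩
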